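/- Let X = (0,∞) with Lebesgue measure, 1 ≤ a < b < ∞, and let ψ : (a,b) → (0,∞) be continuous with inf_{p∈(a,b)} ψ(p) > 0 and such that there exists a measurable f₀ : (0,∞) → ℝ with |f₀|_p = ψ(p) for every p ∈ (a,b). For s > 0 let σ_s f (x) = f(x/s) and N(s) = sup { ‖σ_s f‖_{G(ψ)} : f measurable, ‖f‖_{G(ψ)} ≤ 1 }. Then lim_{s→0+} log N(s)/log s = 1/b and lim_{s→∞} log N(s)/log s = 1/a; i.e. the Boyd indices of the Grand Lebesgue space G(ψ,a,b) are γ₁ = 1/b and γ₂ = 1/a. -/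

import Mathlib

open MeasureTheory Filter Set
open scoped ENNReal Topology

noncomputable section

/-- The `L_p` norm on `(0,∞)` with Lebesgue measure. -/
def lpNorm (f : ℝ → ℝ) (p : ℝ) : ℝ≥0∞ :=
  (∫⁻ x, ENNReal.ofReal (|f x| ^ p) ∂(volume.restrict (Set.Ioi (0 : ℝ)))) ^ (1 / p)

lemma lintegral_dil (g : ℝ → ℝ≥0∞) {s : ℝ} (hs : 0 < s) :
    ∫⁻ x in Ioi (0:ℝ), g (x / s) = ENNReal.ofReal s * ∫⁻ x in Ioi (0:ℝ), g x := by
  have hs' : s⁻¹ ≠ 0 := inv_ne_zero hs.ne'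
  have hemb : MeasurableEmbedding (fun x : ℝ => x / s) := by
    have := (Homeomorph.mulRight₀ s⁻¹ hs').toMeasurableEquiv.measurableEmbedding
    simp only [div_eq_mul_inv]
    exact this
  have hpre : (fun x : ℝ => x / s) ⁻¹' (Ioi 0) = Ioi 0 := by
    ext x
    simp only [mem_preimage, mem_Ioi]
    rw [lt_div_iff₀ hs, zero_mul]
  have hmap : Measure.map (fun x : ℝ => x / s) (volume.restrict (Ioi 0))
      = ENNReal.ofReal s • (volume.restrict (Ioi (0:ℝ))) := by
    conv_lhs => rw [← hpre]
    rw [← Measure.restrict_map hemb.measurable measurableSet_Ioi]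
    have h2 : Measure.map (fun x : ℝ => x / s) volume = ENNReal.ofReal s • volume := by
      simp only [div_eq_mul_inv]
      rw [Real.map_volume_mul_right hs', inv_inv, abs_of_pos hs]
    rw [h2, Measure.restrict_smul]
  rw [← hemb.lintegral_map, hmap, lintegral_smul_measure, smul_eq_mul]

lemma lpNorm_dil (f : ℝ → ℝ) {s p : ℝ} (hs : 0 < s) (hp : 0 < p) :
    lpNorm (fun x => f (x / s)) p = ENNReal.ofReal (s ^ (1 / p)) * lpNorm f p := by
  unfold _root_.lpNorm
  rw [lintegral_dil (fun y => ENNReal.ofReal (|f y| ^ p)) hs,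
    ENNReal.mul_rpow_of_nonneg _ _ (by positivity : (0:ℝ) ≤ 1 / p),
    ENNReal.ofReal_rpow_of_pos hs]

/-- The Grand Lebesgue norm on `(0,∞)`: `‖f‖_{G(ψ)} = sup_{p∈(a,b)} |f|_p/ψ(p)`. -/
def grandNorm (ψ : ℝ → ℝ) (a b : ℝ) (f : ℝ → ℝ) : ℝ≥0∞ :=
  ⨆ p ∈ Set.Ioo a b, lpNorm f p / ENNReal.ofReal (ψ p)

/-- The operator norm of the dilation `σ_s f(x) = f(x/s)` acting on `G(ψ)`. -/
def dilNorm (ψ : ℝ → ℝ) (a b : ℝ) (s : ℝ) : ℝ≥0∞ :=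
  ⨆ (f : ℝ → ℝ) (_ : Measurable f ∧ grandNorm ψ a b f ≤ 1),
    grandNorm ψ a b (fun x => f (x / s))

lemma grandNorm_f₀ {a b : ℝ} (hab : a < b) {ψ : ℝ → ℝ} {c : ℝ} (hc : 0 < c)
    (hψ : ∀ p ∈ Set.Ioo a b, c ≤ ψ p) {f₀ : ℝ → ℝ}
    (hf₀ : ∀ p ∈ Set.Ioo a b, lpNorm f₀ p = ENNReal.ofReal (ψ p)) :
    grandNorm ψ a b f₀ = 1 := by
  have h1 : ∀ p ∈ Set.Ioo a b, lpNorm f₀ p / ENNReal.ofReal (ψ p) = 1 := fun p hp => by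
    rw [hf₀ p hp]
    exact ENNReal.div_self (ENNReal.ofReal_pos.mpr (hc.trans_le (hψ p hp))).ne'
      ENNReal.ofReal_ne_top
  rw [grandNorm]
  rw [iSup_congr (fun p => iSup_congr (fun hp => h1 p hp))]
  exact biSup_const (nonempty_Ioo.mpr hab)

lemma lower_aux {a b : ℝ} (ha : 0 < a) (hab : a < b) {ψ : ℝ → ℝ} {c : ℝ} (hc : 0 < c)
    (hψ : ∀ p ∈ Set.Ioo a b, c ≤ ψ p) {f₀ : ℝ → ℝ} (hf₀m : Measurable f₀)
    (hf₀ : ∀ p ∈ Set.Ioo a b, lpNorm f₀ p = ENNReal.ofReal (ψ p))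
    {s : ℝ} (hs : 0 < s) {q : ℝ} (hq : q ∈ Set.Icc a b) (hq0 : q ≠ 0) :
    ENNReal.ofReal (s ^ (1 / q)) ≤ dilNorm ψ a b s := by
  have hmem : Measurable f₀ ∧ grandNorm ψ a b f₀ ≤ 1 :=
    ⟨hf₀m, le_of_eq (grandNorm_f₀ hab hc hψ hf₀)⟩
  refine le_trans ?_
    (le_iSup₂ (f := fun f (_ : Measurable f ∧ grandNorm ψ a b f ≤ 1) =>
      grandNorm ψ a b (fun x => f (x / s))) f₀ hmem)
  -- each p-term of grandNorm (σ_s f₀) equals ofReal (s ^ (1/p))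
  have hkey : ∀ p ∈ Set.Ioo a b,
      lpNorm (fun x => f₀ (x / s)) p / ENNReal.ofReal (ψ p) = ENNReal.ofReal (s ^ (1 / p)) := by
    intro p hp
    rw [lpNorm_dil f₀ hs (ha.trans hp.1), hf₀ p hp, mul_div_assoc,
      ENNReal.div_self (ENNReal.ofReal_pos.mpr (hc.trans_le (hψ p hp))).ne'
        ENNReal.ofReal_ne_top, mul_one]
  -- limit argument at q
  have hneBot : (𝓝[Set.Ioo a b] q).NeBot := by
    apply mem_closure_iff_nhdsWithin_neBot.mp
    rw [closure_Ioo hab.ne]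
    exact hq
  have hcont : ContinuousAt (fun p : ℝ => ENNReal.ofReal (s ^ (1 / p))) q := by
    apply ENNReal.continuous_ofReal.continuousAt.comp
    have : (fun p : ℝ => s ^ (1 / p)) = fun p => Real.exp (Real.log s * (1 / p)) := by
      funext p; rw [Real.rpow_def_of_pos hs]
    rw [this]
    exact Real.continuous_exp.continuousAt.comp
      (continuousAt_const.mul (continuousAt_const.div continuousAt_id hq0))
  refine le_of_tendsto (hcont.tendsto.mono_left (nhdsWithin_le_nhds : 𝓝[Set.Ioo a b] q ≤ 𝓝 q)) ?_
  filter_upwards [self_mem_nhdsWithin] with p hp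
  rw [← hkey p hp]
  exact le_iSup₂ (f := fun p (_ : p ∈ Set.Ioo a b) =>
    lpNorm (fun x => f₀ (x / s)) p / ENNReal.ofReal (ψ p)) p hp

lemma upper_aux {a b : ℝ} (ha : 0 < a) {ψ : ℝ → ℝ} {c : ℝ} (hc : 0 < c)
    (hψ : ∀ p ∈ Set.Ioo a b, c ≤ ψ p) {s : ℝ} (hs : 0 < s) {q : ℝ}
    (hbound : ∀ p ∈ Set.Ioo a b, s ^ (1 / p) ≤ s ^ (1 / q)) :
    dilNorm ψ a b s ≤ ENNReal.ofReal (s ^ (1 / q)) := by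
  refine iSup_le fun f => iSup_le fun hf => iSup_le fun p => iSup_le fun hp => ?_
  obtain ⟨hfm, hfle⟩ := hf
  have hψp0 : ENNReal.ofReal (ψ p) ≠ 0 :=
    (ENNReal.ofReal_pos.mpr (hc.trans_le (hψ p hp))).ne'
  have h2 : lpNorm f p / ENNReal.ofReal (ψ p) ≤ 1 :=
    le_trans (le_iSup₂ (f := fun p (_ : p ∈ Set.Ioo a b) =>
      lpNorm f p / ENNReal.ofReal (ψ p)) p hp) hfle
  calc lpNorm (fun x => f (x / s)) p / ENNReal.ofReal (ψ p)
      = ENNReal.ofReal (s ^ (1 / p)) * (lpNorm f p / ENNReal.ofReal (ψ p)) := by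
        rw [lpNorm_dil f hs (ha.trans hp.1), mul_div_assoc]
    _ ≤ ENNReal.ofReal (s ^ (1 / p)) * 1 := mul_le_mul_right h2 _
    _ = ENNReal.ofReal (s ^ (1 / p)) := mul_one _
    _ ≤ ENNReal.ofReal (s ^ (1 / q)) := ENNReal.ofReal_le_ofReal (hbound p hp)

lemma dil_small {a b : ℝ} (ha : 0 < a) (hab : a < b) {ψ : ℝ → ℝ} {c : ℝ} (hc : 0 < c)
    (hψ : ∀ p ∈ Set.Ioo a b, c ≤ ψ p) {f₀ : ℝ → ℝ} (hf₀m : Measurable f₀)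
    (hf₀ : ∀ p ∈ Set.Ioo a b, lpNorm f₀ p = ENNReal.ofReal (ψ p))
    {s : ℝ} (hs : 0 < s) (hs1 : s < 1) :
    dilNorm ψ a b s = ENNReal.ofReal (s ^ (1 / b)) := by
  have hb0 : 0 < b := ha.trans hab
  refine le_antisymm (upper_aux ha hc hψ hs fun p hp => ?_)
    (lower_aux ha hab hc hψ hf₀m hf₀ hs (right_mem_Icc.mpr hab.le) hb0.ne')
  exact Real.rpow_le_rpow_of_exponent_ge hs hs1.le
    (one_div_le_one_div_of_le (ha.trans hp.1) hp.2.le)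

lemma dil_large {a b : ℝ} (ha : 0 < a) (hab : a < b) {ψ : ℝ → ℝ} {c : ℝ} (hc : 0 < c)
    (hψ : ∀ p ∈ Set.Ioo a b, c ≤ ψ p) {f₀ : ℝ → ℝ} (hf₀m : Measurable f₀)
    (hf₀ : ∀ p ∈ Set.Ioo a b, lpNorm f₀ p = ENNReal.ofReal (ψ p))
    {s : ℝ} (hs1 : 1 < s) :
    dilNorm ψ a b s = ENNReal.ofReal (s ^ (1 / a)) := by
  refine le_antisymm (upper_aux ha hc hψ (zero_lt_one.trans hs1) fun p hp => ?_)
    (lower_aux ha hab hc hψ hf₀m hf₀ (zero_lt_one.trans hs1)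
      (left_mem_Icc.mpr hab.le) ha.ne')
  exact Real.rpow_le_rpow_of_exponent_le hs1.le
    (one_div_le_one_div_of_le ha hp.1.le)

/-- The Boyd indices of the Grand Lebesgue space `G(ψ, a, b)` on `(0,∞)` are
`γ₁ = 1/b` and `γ₂ = 1/a`. -/
theorem boyd_indices_grand (a b : ℝ) (ha : 1 ≤ a) (hab : a < b)
    (ψ : ℝ → ℝ) (hψc : ContinuousOn ψ (Set.Ioo a b))
    (hψinf : ∃ c : ℝ, 0 < c ∧ ∀ p ∈ Set.Ioo a b, c ≤ ψ p)
    (f₀ : ℝ → ℝ) (hf₀m : Measurable f₀)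
    (hf₀ : ∀ p ∈ Set.Ioo a b, lpNorm f₀ p = ENNReal.ofReal (ψ p)) :
    Tendsto (fun s : ℝ => Real.log (dilNorm ψ a b s).toReal / Real.log s)
      (𝓝[>] 0) (𝓝 (1 / b)) ∧
    Tendsto (fun s : ℝ => Real.log (dilNorm ψ a b s).toReal / Real.log s)
      atTop (𝓝 (1 / a)) := by
  obtain ⟨c, hc, hψb⟩ := hψinf
  have ha0 : (0:ℝ) < a := zero_lt_one.trans_le ha
  constructor
  · refine tendsto_const_nhds.congr' ?_
    filter_upwards [Ioo_mem_nhdsGT zero_lt_one] with s hs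
    rw [dil_small ha0 hab hc hψb hf₀m hf₀ hs.1 hs.2,
      ENNReal.toReal_ofReal (Real.rpow_nonneg hs.1.le _), Real.log_rpow hs.1,
      mul_div_assoc, div_self (Real.log_neg hs.1 hs.2).ne, mul_one]
  · refine tendsto_const_nhds.congr' ?_
    filter_upwards [eventually_gt_atTop 1] with s hs
    rw [dil_large ha0 hab hc hψb hf₀m hf₀ hs,
      ENNReal.toReal_ofReal (Real.rpow_nonneg (zero_lt_one.trans hs).le _),
      Real.log_rpow (zero_lt_one.trans hs),
      mul_div_assoc, div_self (Real.log_pos hs).ne', mul_one]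

end
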